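/- For every q ∈ (0, 0.1], define L̄(z) = q·z / (1 - (1-q)^{2^z - 1}) for real z ∈ [1, ∞). Then there exists a real number z₀ with z₀ > -log₂(-ln(1-q)) such that the derivative of L̄ is negative on [1, z₀), zero at z₀, and positive on (z₀, ∞); consequently L̄ is strictly decreasing on [1, z₀], strictly increasing on [z₀, ∞), and attains its global minimum on [1, ∞) exactly at z = z₀. -/

import Mathlib

open Real Set Filter

noncomputable def auxE (a z : ℝ) : ℝ := Real.exp (-(a * ((2:ℝ) ^ z - 1)))
noncomputable def auxD (a z : ℝ) : ℝ := 1 - auxE a z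
noncomputable def auxG (a z : ℝ) : ℝ :=
  auxD a z - z * (a * Real.log 2 * (2:ℝ) ^ z) * auxE a z

lemma two_rpow_hasDerivAt (z : ℝ) :
    HasDerivAt (fun z : ℝ => (2:ℝ) ^ z) ((2:ℝ) ^ z * Real.log 2) z :=
  (Real.hasStrictDerivAt_const_rpow (by norm_num) z).hasDerivAt

lemma two_rpow_pos (z : ℝ) : 0 < (2:ℝ) ^ z := Real.rpow_pos_of_pos (by norm_num) z

lemma auxE_pos (a z : ℝ) : 0 < auxE a z := Real.exp_pos _

lemma auxE_hasDerivAt (a z : ℝ) :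
    HasDerivAt (auxE a) (-(a * ((2:ℝ) ^ z * Real.log 2)) * auxE a z) z := by
  have h1 : HasDerivAt (fun z : ℝ => -(a * ((2:ℝ) ^ z - 1)))
      (-(a * ((2:ℝ) ^ z * Real.log 2))) z :=
    (((two_rpow_hasDerivAt z).sub_const 1).const_mul a).neg
  have := h1.exp
  exact this.congr_deriv (by simp only [auxE]; ring)

lemma auxD_hasDerivAt (a z : ℝ) :
    HasDerivAt (auxD a) (a * Real.log 2 * (2:ℝ) ^ z * auxE a z) z := by
  have := ((auxE_hasDerivAt a z).const_sub 1)
  refine this.congr_deriv ?_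
  ring

lemma auxG_hasDerivAt (a z : ℝ) :
    HasDerivAt (auxG a)
      ((z * (a * Real.log 2) * Real.log 2 * (2:ℝ) ^ z * auxE a z) *
        (a * (2:ℝ) ^ z - 1)) z := by
  have hf : HasDerivAt (fun z : ℝ => z * (a * Real.log 2 * (2:ℝ) ^ z))
      (1 * (a * Real.log 2 * (2:ℝ) ^ z) +
        z * ((2:ℝ) ^ z * Real.log 2 * (a * Real.log 2))) z := by
    have := (hasDerivAt_id z).mul ((two_rpow_hasDerivAt z).const_mul (a * Real.log 2))
    refine this.congr_deriv ?_
    simp only [id]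
    ring
  have hP := hf.mul (auxE_hasDerivAt a z)
  have := (auxD_hasDerivAt a z).sub hP
  refine this.congr_deriv ?_
  ring

lemma auxG_differentiable (a : ℝ) : Differentiable ℝ (auxG a) :=
  fun z => (auxG_hasDerivAt a z).differentiableAt

lemma auxG_deriv (a z : ℝ) :
    deriv (auxG a) z =
      (z * (a * Real.log 2) * Real.log 2 * (2:ℝ) ^ z * auxE a z) *
        (a * (2:ℝ) ^ z - 1) :=
  (auxG_hasDerivAt a z).deriv

lemma auxD_pos {a : ℝ} (ha : 0 < a) {z : ℝ} (hz : 0 < z) : 0 < auxD a z := by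
  have h1 : (1:ℝ) < (2:ℝ) ^ z := Real.one_lt_rpow_iff_of_pos (by norm_num) |>.mpr
    (Or.inl ⟨by norm_num, hz⟩)
  have : auxE a z < 1 := by
    rw [auxE, Real.exp_lt_one_iff]
    nlinarith
  simp only [auxD]
  linarith

/-- key monotonicity: G is strictly increasing on `[z*, ∞)`. -/
lemma auxG_strictMonoOn {a : ℝ} (ha : 0 < a) (ha9 : a ≤ 1/9) :
    StrictMonoOn (auxG a) (Ici (-Real.logb 2 a)) := by
  have hzs1 : (1:ℝ) < -Real.logb 2 a := by
    rw [← Real.logb_inv]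
    have h2 : (2:ℝ) < a⁻¹ := by
      have : a⁻¹ ≥ 9 := by
        rw [ge_iff_le, le_inv_comm₀ (by norm_num) ha]
        linarith
      linarith
    calc (1:ℝ) = Real.logb 2 2 := by simp
    _ < Real.logb 2 a⁻¹ := by
      apply Real.logb_lt_logb (by norm_num) (by norm_num) h2
  apply strictMonoOn_of_deriv_pos (convex_Ici _)
    ((auxG_differentiable a).continuous.continuousOn)
  intro z hz
  rw [interior_Ici] at hz
  have hz0 : (0:ℝ) < z := lt_trans (lt_trans one_pos hzs1) hz
  rw [auxG_deriv]
  have hfac : 0 < a * (2:ℝ) ^ z - 1 := by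
    have h2z : a⁻¹ < (2:ℝ) ^ z := by
      have : (2:ℝ) ^ (-Real.logb 2 a) < (2:ℝ) ^ z :=
        (Real.rpow_lt_rpow_left_iff (by norm_num)).mpr hz
      rwa [← Real.logb_inv, Real.rpow_logb (by norm_num) (by norm_num)
        (inv_pos.mpr ha)] at this
    have h := mul_lt_mul_of_pos_left h2z ha
    rw [mul_inv_cancel₀ ha.ne'] at h
    linarith
  have hl2 : (0:ℝ) < Real.log 2 := Real.log_pos (by norm_num)
  have := two_rpow_pos z
  have := auxE_pos a z
  positivity

lemma auxG_strictAntiOn {a : ℝ} (ha : 0 < a) :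
    StrictAntiOn (auxG a) (Icc 1 (-Real.logb 2 a)) := by
  apply strictAntiOn_of_deriv_neg (convex_Icc _ _)
    ((auxG_differentiable a).continuous.continuousOn)
  intro z hz
  rw [interior_Icc] at hz
  have hz0 : (0:ℝ) < z := lt_trans one_pos hz.1
  rw [auxG_deriv]
  have hfac : a * (2:ℝ) ^ z - 1 < 0 := by
    have h2z : (2:ℝ) ^ z < a⁻¹ := by
      have : (2:ℝ) ^ z < (2:ℝ) ^ (-Real.logb 2 a) :=
        (Real.rpow_lt_rpow_left_iff (by norm_num)).mpr hz.2
      rwa [← Real.logb_inv, Real.rpow_logb (by norm_num) (by norm_num)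
        (inv_pos.mpr ha)] at this
    have h := mul_lt_mul_of_pos_left h2z ha
    rw [mul_inv_cancel₀ ha.ne'] at h
    linarith
  have hl2 : (0:ℝ) < Real.log 2 := Real.log_pos (by norm_num)
  have h2p := two_rpow_pos z
  have hEp := auxE_pos a z
  have hpref : 0 < z * (a * Real.log 2) * Real.log 2 * (2:ℝ) ^ z * auxE a z := by
    positivity
  exact mul_neg_of_pos_of_neg hpref hfac

lemma auxG_one_neg {a : ℝ} (ha : 0 < a) (ha9 : a ≤ 1/9) : auxG a 1 < 0 := by
  have hval : auxG a 1 = 1 - Real.exp (-a) - 2 * a * Real.log 2 * Real.exp (-a) := by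
    simp only [auxG, auxD, auxE, Real.rpow_one]
    norm_num
    ring
  rw [hval]
  have hl2 : (0.6931471803:ℝ) < Real.log 2 := Real.log_two_gt_d9
  have h1 : 1 - a ≤ Real.exp (-a) := by
    have := Real.add_one_le_exp (-a); linarith
  have key : 1 < 2 * Real.log 2 * (1 - a) := by nlinarith
  have h2 : a * 1 < a * (2 * Real.log 2 * (1 - a)) := mul_lt_mul_of_pos_left key ha
  have h3 : (2 * a * Real.log 2) * (1 - a) ≤ (2 * a * Real.log 2) * Real.exp (-a) := by
    have : (0:ℝ) ≤ 2 * a * Real.log 2 := by positivity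
    exact mul_le_mul_of_nonneg_left h1 this
  nlinarith

lemma two_rpow_tendsto_atTop : Tendsto (fun z : ℝ => (2:ℝ) ^ z) atTop atTop := by
  have h : (fun z : ℝ => (2:ℝ) ^ z) = fun z => Real.exp (Real.log 2 * z) := by
    funext z; rw [Real.rpow_def_of_pos (by norm_num)]
  rw [h]
  exact Real.tendsto_exp_atTop.comp
    (Tendsto.const_mul_atTop (Real.log_pos (by norm_num)) tendsto_id)

lemma self_le_two_rpow {z : ℝ} (hz : 1 ≤ z) : z ≤ (2:ℝ) ^ z := by
  have h2 : (2:ℝ) ^ z = ((2:ℝ) ^ (z/2)) ^ 2 := by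
    rw [← Real.rpow_natCast ((2:ℝ) ^ (z/2)) 2, ← Real.rpow_mul (by norm_num)]
    norm_num
  have h3 : 1 + z/2 * Real.log 2 ≤ (2:ℝ) ^ (z/2) := by
    rw [Real.rpow_def_of_pos (by norm_num)]
    have := Real.add_one_le_exp (Real.log 2 * (z/2))
    linarith [this]
  have hl2 : (0.6931471803:ℝ) < Real.log 2 := Real.log_two_gt_d9
  have h0 : (0:ℝ) ≤ 1 + z/2 * Real.log 2 := by nlinarith
  have := mul_self_le_mul_self h0 h3
  rw [h2]
  nlinarith [sq_nonneg (z * Real.log 2 - 2)]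

lemma auxG_tendsto {a : ℝ} (ha : 0 < a) :
    Tendsto (auxG a) atTop (nhds 1) := by
  have hu : Tendsto (fun z : ℝ => a * ((2:ℝ) ^ z - 1)) atTop atTop :=
    Tendsto.const_mul_atTop ha
      (tendsto_atTop_add_const_right atTop (-1) two_rpow_tendsto_atTop |>.congr
        (fun z => by ring))
  have hE0 : Tendsto (fun z : ℝ => auxE a z) atTop (nhds 0) := by
    have := Real.tendsto_exp_atBot.comp (tendsto_neg_atTop_atBot.comp hu)
    simpa [auxE, Function.comp_def] using this
  have hu2 : Tendsto (fun z : ℝ => a * (2:ℝ) ^ z) atTop atTop :=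
    Tendsto.const_mul_atTop ha two_rpow_tendsto_atTop
  have htail : Tendsto (fun z : ℝ =>
      (a * (2:ℝ) ^ z) ^ 2 * Real.exp (-(a * (2:ℝ) ^ z))) atTop (nhds 0) := by
    have := (Real.tendsto_pow_mul_exp_neg_atTop_nhds_zero 2).comp hu2
    simpa [Function.comp_def] using this
  have hterm : Tendsto (fun z : ℝ =>
      z * (a * Real.log 2 * (2:ℝ) ^ z) * auxE a z) atTop (nhds 0) := by
    apply squeeze_zero' (g := fun z => (Real.log 2 * Real.exp a / a) *
      ((a * (2:ℝ) ^ z) ^ 2 * Real.exp (-(a * (2:ℝ) ^ z))))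
    · filter_upwards [eventually_ge_atTop (1:ℝ)] with z hz
      have := two_rpow_pos z
      have := auxE_pos a z
      have hl2 : (0:ℝ) < Real.log 2 := Real.log_pos (by norm_num)
      have hz0 : (0:ℝ) ≤ z := by linarith
      positivity
    · filter_upwards [eventually_ge_atTop (1:ℝ)] with z hz
      have hzle : z ≤ (2:ℝ) ^ z := self_le_two_rpow hz
      have hEeq : auxE a z = Real.exp a * Real.exp (-(a * (2:ℝ) ^ z)) := by
        rw [auxE, ← Real.exp_add]; ring_nf
      rw [hEeq]
      have h2p := two_rpow_pos z
      have hep := Real.exp_pos (-(a * (2:ℝ) ^ z))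
      have hl2 : (0:ℝ) < Real.log 2 := Real.log_pos (by norm_num)
      have hkey : z * (a * Real.log 2 * (2:ℝ) ^ z) ≤
          (Real.log 2 / a) * (a * (2:ℝ) ^ z) ^ 2 := by
        have : z * (a * (2:ℝ) ^ z) ≤ (2:ℝ) ^ z * (a * (2:ℝ) ^ z) := by
          have : (0:ℝ) < a * (2:ℝ) ^ z := by positivity
          exact mul_le_mul_of_nonneg_right hzle this.le
        rw [div_mul_eq_mul_div, le_div_iff₀ ha]
        ring_nf
        ring_nf at this
        nlinarith [mul_le_mul_of_nonneg_left this (by positivity : (0:ℝ) ≤ a * Real.log 2)]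
      calc z * (a * Real.log 2 * (2:ℝ) ^ z) * (Real.exp a * Real.exp (-(a * (2:ℝ) ^ z)))
          ≤ ((Real.log 2 / a) * (a * (2:ℝ) ^ z) ^ 2) *
            (Real.exp a * Real.exp (-(a * (2:ℝ) ^ z))) := by
            apply mul_le_mul_of_nonneg_right hkey
            positivity
        _ = (Real.log 2 * Real.exp a / a) *
            ((a * (2:ℝ) ^ z) ^ 2 * Real.exp (-(a * (2:ℝ) ^ z))) := by ring
    · simpa using htail.const_mul (Real.log 2 * Real.exp a / a)
  have : Tendsto (fun z : ℝ => 1 - auxE a z -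
      z * (a * Real.log 2 * (2:ℝ) ^ z) * auxE a z) atTop (nhds (1 - 0 - 0)) :=
    (tendsto_const_nhds.sub hE0).sub hterm
  simp only [sub_zero] at this
  exact this

/-- For `q ∈ (0, 0.1]` and `L̄(z) = qz/(1-(1-q)^{2^z-1})` on `[1,∞)`, there is
`z₀ > -log₂(-ln(1-q))` with `L̄' < 0` on `[1,z₀)`, `L̄'(z₀) = 0`, `L̄' > 0` on
`(z₀,∞)`; so `L̄` strictly decreases on `[1,z₀]`, strictly increases on
`[z₀,∞)`, and attains its global minimum on `[1,∞)` exactly at `z₀`. -/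
theorem stmt_6 (q : ℝ) (hq : q ∈ Set.Ioc (0:ℝ) 0.1)
    (L : ℝ → ℝ) (hL : ∀ z : ℝ, L z = q * z / (1 - (1 - q) ^ ((2:ℝ) ^ z - 1))) :
    ∃ z₀ : ℝ, -Real.logb 2 (-Real.log (1 - q)) < z₀ ∧
      (∀ z ∈ Set.Ico (1:ℝ) z₀, deriv L z < 0) ∧
      deriv L z₀ = 0 ∧
      (∀ z ∈ Set.Ioi z₀, 0 < deriv L z) ∧
      StrictAntiOn L (Set.Icc 1 z₀) ∧
      StrictMonoOn L (Set.Ici z₀) ∧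
      (∀ z ∈ Set.Ici (1:ℝ), L z₀ ≤ L z) ∧
      (∀ z ∈ Set.Ici (1:ℝ), z ≠ z₀ → L z₀ < L z) := by
  obtain ⟨hq0, hq1⟩ := hq
  have h1q : (0:ℝ) < 1 - q := by norm_num at hq1 ⊢; linarith
  have h1q' : 1 - q < 1 := by linarith
  set a : ℝ := -Real.log (1 - q) with ha_def
  have ha : 0 < a := neg_pos.mpr (Real.log_neg h1q h1q')
  have ha9 : a ≤ 1/9 := by
    have h := Real.log_le_sub_one_of_pos (inv_pos.mpr h1q)
    rw [Real.log_inv] at h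
    have hinv : (1 - q)⁻¹ ≤ (0.9:ℝ)⁻¹ := by
      apply inv_anti₀ (by norm_num)
      norm_num at hq1 ⊢; linarith
    norm_num at hinv
    linarith
  set zs : ℝ := -Real.logb 2 a with hzs_def
  have hzs1 : (1:ℝ) < zs := by
    rw [hzs_def, ← Real.logb_inv]
    have h2 : (2:ℝ) < a⁻¹ := by
      have : (9:ℝ) ≤ a⁻¹ := by
        rw [le_inv_comm₀ (by norm_num) ha]; linarith
      linarith
    calc (1:ℝ) = Real.logb 2 2 := by simp
    _ < Real.logb 2 a⁻¹ := Real.logb_lt_logb (by norm_num) (by norm_num) h2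
  -- rewrite L
  have hLD : ∀ z, L z = q * z / auxD a z := by
    intro z
    rw [hL]
    congr 2
    rw [auxE, Real.rpow_def_of_pos h1q]
    congr 1
    rw [ha_def]
    ring
  have hLfun : L = fun z => q * z / auxD a z := funext hLD
  -- derivative of L
  have hLderiv : ∀ z : ℝ, 0 < z →
      HasDerivAt L (q * auxG a z / (auxD a z) ^ 2) z := by
    intro z hz
    have hD := auxD_pos ha hz
    have h := (((hasDerivAt_id z).const_mul q).div (auxD_hasDerivAt a z) hD.ne')
    rw [hLfun]
    refine h.congr_deriv ?_
    unfold auxG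
    simp only [id]
    field_simp
  have hderiveq : ∀ z : ℝ, 0 < z → deriv L z = q * auxG a z / (auxD a z) ^ 2 :=
    fun z hz => (hLderiv z hz).deriv
  -- find z₀
  have hmono := auxG_strictMonoOn ha ha9
  have hanti := auxG_strictAntiOn (a := a) ha
  have hG1 := auxG_one_neg ha ha9
  have hGzs : auxG a zs < 0 := by
    have := hanti ⟨le_rfl, hzs1.le⟩ ⟨hzs1.le, le_rfl⟩ hzs1
    linarith
  obtain ⟨M, hMpos, hMge⟩ :=
    ((auxG_tendsto ha).eventually (eventually_gt_nhds one_pos) |>.and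
      (eventually_ge_atTop zs)).exists
  have hsub := intermediate_value_Icc hMge
    ((auxG_differentiable a).continuous.continuousOn (s := Icc zs M))
  obtain ⟨z₀, hz₀mem, hz₀⟩ := hsub ⟨hGzs.le, hMpos.le⟩
  have hzslt : zs < z₀ := by
    rcases eq_or_lt_of_le hz₀mem.1 with rfl | h
    · exact absurd hz₀ hGzs.ne
    · exact h
  have hz₀1 : (1:ℝ) < z₀ := hzs1.trans hzslt
  have hz₀0 : (0:ℝ) < z₀ := lt_trans one_pos hz₀1
  -- sign of G
  have hGneg : ∀ z ∈ Ico (1:ℝ) z₀, auxG a z < 0 := by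
    intro z hz
    rcases le_or_gt z zs with h | h
    · rcases eq_or_lt_of_le hz.1 with rfl | h1
      · exact hG1
      · have := hanti ⟨le_rfl, hzs1.le⟩ ⟨h1.le, h⟩ h1
        linarith
    · have := hmono (le_of_lt h) hzslt.le hz.2
      rw [hz₀] at this
      linarith
  have hGpos : ∀ z ∈ Ioi z₀, 0 < auxG a z := by
    intro z hz
    have := hmono hzslt.le (hzslt.trans hz).le hz
    rw [hz₀] at this
    linarith
  -- derivative signs
  have hderivneg : ∀ z ∈ Ico (1:ℝ) z₀, deriv L z < 0 := by
    intro z hz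
    have hz0 : (0:ℝ) < z := lt_of_lt_of_le one_pos hz.1
    rw [hderiveq z hz0]
    have hD := auxD_pos ha hz0
    exact div_neg_of_neg_of_pos (mul_neg_of_pos_of_neg hq0 (hGneg z hz)) (by positivity)
  have hderivz₀ : deriv L z₀ = 0 := by
    rw [hderiveq z₀ hz₀0, hz₀, mul_zero, zero_div]
  have hderivpos : ∀ z ∈ Ioi z₀, 0 < deriv L z := by
    intro z hz
    have hz0 : (0:ℝ) < z := lt_trans hz₀0 hz
    rw [hderiveq z hz0]
    have hD := auxD_pos ha hz0
    exact div_pos (mul_pos hq0 (hGpos z hz)) (by positivity)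
  -- monotonicity of L
  have hcont : ∀ z : ℝ, 0 < z → ContinuousAt L z :=
    fun z hz => (hLderiv z hz).differentiableAt.continuousAt
  have hLanti : StrictAntiOn L (Icc 1 z₀) := by
    apply strictAntiOn_of_deriv_neg (convex_Icc _ _)
    · intro z hz
      exact (hcont z (lt_of_lt_of_le one_pos hz.1)).continuousWithinAt
    · intro z hz
      rw [interior_Icc] at hz
      exact hderivneg z ⟨hz.1.le, hz.2⟩
  have hLmono : StrictMonoOn L (Ici z₀) := by
    apply strictMonoOn_of_deriv_pos (convex_Ici _)
    · intro z hz
      exact (hcont z (lt_of_lt_of_le hz₀0 hz)).continuousWithinAt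
    · intro z hz
      rw [interior_Ici] at hz
      exact hderivpos z hz
  have hminlt : ∀ z ∈ Ici (1:ℝ), z ≠ z₀ → L z₀ < L z := by
    intro z hz hne
    rcases lt_or_gt_of_ne hne with h | h
    · exact hLanti ⟨hz, h.le⟩ ⟨hz₀1.le, le_rfl⟩ h
    · exact hLmono (Set.mem_Ici.mpr le_rfl) h.le h
  refine ⟨z₀, hzslt, hderivneg, hderivz₀, hderivpos, hLanti, hLmono, ?_, hminlt⟩
  intro z hz
  by_cases hne : z = z₀
  · rw [hne]
  · exact (hminlt z hz hne).le
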